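/- Let K be a finite index set, C > 0, and d : K → ℂ with Re d_k ≥ 0, Im d_k ≥ 0 and |d_k| ≤ C for every k ∈ K. For each k define the modified demand d̃_k = min((Re d_k + Im d_k)/√2, C/√2). Then every S ⊆ K with Σ_{k∈S} d̃_k ≤ C/√2 satisfies |Σ_{k∈S} d_k| ≤ C. -/

import Mathlib

/-- Feasibility preservation of the monotone algorithm `Alg^b`: any solution
feasible for the 1-KP instance with modified demands
`d̃_k = min((Re d_k + Im d_k)/√2, C/√2)` and capacity `C/√2` is feasible for the
original C-KP instance. -/
theorem algb_feasible {K : Type*} [Fintype K] (C : ℝ) (hC : 0 < C)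
    (d : K → ℂ) (hre : ∀ k, 0 ≤ (d k).re) (him : ∀ k, 0 ≤ (d k).im)
    (hmag : ∀ k, ‖d k‖ ≤ C)
    (dt : K → ℝ)
    (hdt : ∀ k, dt k = min (((d k).re + (d k).im) / Real.sqrt 2) (C / Real.sqrt 2))
    (S : Finset K) (hS : ∑ k ∈ S, dt k ≤ C / Real.sqrt 2) :
    ‖∑ k ∈ S, d k‖ ≤ C := by
  have h2 : (0:ℝ) < Real.sqrt 2 := Real.sqrt_pos.2 (by norm_num)
  have key : ∀ k, ‖d k‖ ≤ Real.sqrt 2 * dt k := by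
    intro k
    rw [hdt k]
    rcases le_total (((d k).re + (d k).im) / Real.sqrt 2) (C / Real.sqrt 2) with h | h
    · rw [min_eq_left h, mul_div_cancel₀ _ h2.ne']
      calc ‖d k‖ ≤ |(d k).re| + |(d k).im| :=
            Complex.norm_le_abs_re_add_abs_im _
        _ = (d k).re + (d k).im := by
            rw [abs_of_nonneg (hre k), abs_of_nonneg (him k)]
    · rw [min_eq_right h, mul_div_cancel₀ _ h2.ne']
      exact hmag k
  calc ‖∑ k ∈ S, d k‖ ≤ ∑ k ∈ S, ‖d k‖ :=
        norm_sum_le _ _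
    _ ≤ ∑ k ∈ S, Real.sqrt 2 * dt k := Finset.sum_le_sum fun k _ => key k
    _ = Real.sqrt 2 * ∑ k ∈ S, dt k := by rw [Finset.mul_sum]
    _ ≤ Real.sqrt 2 * (C / Real.sqrt 2) := by
        exact mul_le_mul_of_nonneg_left hS h2.le
    _ = C := mul_div_cancel₀ _ h2.ne'
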